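/- Let n = d·e be a squarefree positive integer and let t be an integer whose residue class modulo e has multiplicative order d in (ℤ/eℤ)ˣ. For any element (b, a) of G(d,e,t), its conjugacy class equals the set {(t^r·b + s·(1 − t^a), a) : r, s ∈ ℤ}, where the first component is computed in ℤ/eℤ. -/

import Mathlib

/-- The units of `ZMod e` act on `Multiplicative (ZMod e)` as (multiplicative) automorphisms. -/
def unitsMulAut (e : ℕ) : (ZMod e)ˣ →* MulAut (Multiplicative (ZMod e)) where
  toFun u := AddEquiv.toMultiplicative (DistribMulAction.toAddAut (ZMod e)ˣ (ZMod e) u)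
  map_one' := by
    ext x
    show Multiplicative.ofAdd ((1 : (ZMod e)ˣ) • x.toAdd) = x
    simp
  map_mul' u v := by
    ext x
    show Multiplicative.ofAdd (((u * v) : (ZMod e)ˣ) • x.toAdd)
      = Multiplicative.ofAdd (u • v • x.toAdd)
    rw [mul_smul]

/-- The homomorphism `Multiplicative (ZMod d) →* (ZMod e)ˣ` sending `a` to `u ^ a`,
well defined since `u ^ d = 1`. -/
def zmodPowHom {e : ℕ} (d : ℕ) (u : (ZMod e)ˣ) (hu : u ^ d = 1) :
    Multiplicative (ZMod d) →* (ZMod e)ˣ :=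
  AddMonoidHom.toMultiplicativeLeft
    (ZMod.lift d ⟨zmultiplesHom (Additive (ZMod e)ˣ) (Additive.ofMul u), by
      simpa [zmultiplesHom, ← ofMul_pow] using congrArg Additive.ofMul hu⟩)

/-- The group `G(d,e,t)` where `u` is the unit of `ZMod e` given by `t` :
the semidirect product `(ℤ/eℤ) ⋊ (ℤ/dℤ)` in which `a ∈ ℤ/dℤ` acts on `ℤ/eℤ` by
`b ↦ t ^ a * b`.  This is the group with presentation
`⟨x, y | x ^ d = 1, y ^ e = 1, x⁻¹ * y * x = y ^ t⟩`, the element `(b, a)`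
corresponding to `x ^ a * y ^ b`. -/
abbrev Gdet (d e : ℕ) (u : (ZMod e)ˣ) (hu : u ^ d = 1) : Type :=
  SemidirectProduct (Multiplicative (ZMod e)) (Multiplicative (ZMod d))
    ((unitsMulAut e).comp (zmodPowHom d u hu))


section helpers
variable {d e : ℕ} {u : (ZMod e)ˣ} (hu' : u ^ d = 1)

lemma zmodPowHom_intCast (r : ℤ) :
    zmodPowHom d u hu' (Multiplicative.ofAdd ((r : ZMod d))) = u ^ r := by
  have h : zmodPowHom d u hu' (Multiplicative.ofAdd ((r : ZMod d)))
      = Additive.toMul (ZMod.lift d ⟨zmultiplesHom (Additive (ZMod e)ˣ) (Additive.ofMul u), by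
          simpa [zmultiplesHom, ← ofMul_pow] using congrArg Additive.ofMul hu'⟩ ((r : ZMod d))) := rfl
  rw [h, ZMod.lift_coe]
  show Additive.toMul (r • Additive.ofMul u) = u ^ r
  rw [← ofMul_zpow]
  rfl

lemma phi_apply (r : ℤ) (c : ZMod e) :
    ((unitsMulAut e).comp (zmodPowHom d u hu')) (Multiplicative.ofAdd ((r : ZMod d)))
      (Multiplicative.ofAdd c)
    = Multiplicative.ofAdd (((u ^ r : (ZMod e)ˣ) : ZMod e) * c) := by
  rw [MonoidHom.comp_apply, zmodPowHom_intCast hu']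
  show Multiplicative.ofAdd ((u ^ r) • c) = _
  rw [Units.smul_def, smul_eq_mul]

lemma conj_formula (t : ℤ) (hu : (u : ZMod e) = (t : ZMod e)) (b : ZMod e) (a : ℕ) (r s : ℤ) :
    (⟨Multiplicative.ofAdd ((s : ZMod e)), Multiplicative.ofAdd ((r : ZMod d))⟩ : Gdet d e u hu') *
      ⟨Multiplicative.ofAdd b, Multiplicative.ofAdd ((a : ZMod d))⟩ *
      (⟨Multiplicative.ofAdd ((s : ZMod e)), Multiplicative.ofAdd ((r : ZMod d))⟩ : Gdet d e u hu')⁻¹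
    = ⟨Multiplicative.ofAdd (((u ^ r : (ZMod e)ˣ) : ZMod e) * b
          + (s : ZMod e) * (1 - (t : ZMod e) ^ a)),
       Multiplicative.ofAdd ((a : ZMod d))⟩ := by
  have h2 : Multiplicative.ofAdd ((r : ZMod d)) * Multiplicative.ofAdd (((a : ℕ) : ZMod d))
      = Multiplicative.ofAdd (((r + a : ℤ) : ZMod d)) := by
    show Multiplicative.ofAdd ((r : ZMod d) + (a : ZMod d)) = _
    push_cast; rfl
  have h1 : (Multiplicative.ofAdd ((r : ZMod d)))⁻¹
      = Multiplicative.ofAdd (((-r : ℤ) : ZMod d)) := by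
    push_cast; rfl
  apply SemidirectProduct.ext
  · show Multiplicative.ofAdd ((s : ZMod e))
        * ((unitsMulAut e).comp (zmodPowHom d u hu')) (Multiplicative.ofAdd ((r : ZMod d)))
            (Multiplicative.ofAdd b)
        * ((unitsMulAut e).comp (zmodPowHom d u hu'))
            (Multiplicative.ofAdd ((r : ZMod d)) * Multiplicative.ofAdd (((a:ℕ) : ZMod d)))
            (((unitsMulAut e).comp (zmodPowHom d u hu'))
              (Multiplicative.ofAdd ((r : ZMod d)))⁻¹ (Multiplicative.ofAdd ((s : ZMod e)))⁻¹)
        = _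
    rw [h2, h1]
    have h3 : (Multiplicative.ofAdd ((s : ZMod e)))⁻¹
        = Multiplicative.ofAdd ((-(s : ZMod e))) := rfl
    rw [h3, phi_apply, phi_apply, phi_apply]
    show Multiplicative.ofAdd ((s : ZMod e) + ((u ^ r : (ZMod e)ˣ) : ZMod e) * b
        + ((u ^ (r + a) : (ZMod e)ˣ) : ZMod e) * (((u ^ (-r) : (ZMod e)ˣ) : ZMod e) * (-(s : ZMod e)))) = _
    congr 1
    have key : ((u ^ (r + a) : (ZMod e)ˣ) : ZMod e) * ((u ^ (-r) : (ZMod e)ˣ) : ZMod e)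
        = (t : ZMod e) ^ a := by
      rw [← Units.val_mul, ← zpow_add, ← hu]
      have : r + a + -r = (a : ℤ) := by ring
      rw [this, zpow_natCast, Units.val_pow_eq_pow_val]
    ring_nf
    rw [mul_assoc, key]
  · show Multiplicative.ofAdd ((r : ZMod d)) * Multiplicative.ofAdd (((a:ℕ) : ZMod d))
        * (Multiplicative.ofAdd ((r : ZMod d)))⁻¹ = Multiplicative.ofAdd (((a:ℕ) : ZMod d))
    rw [mul_comm, ← mul_assoc, inv_mul_cancel, one_mul]

end helpers

theorem conjugatesOf_eq (d e : ℕ) (hd : 0 < d) (he : 0 < e)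
    (hn : Squarefree (d * e)) (t : ℤ) (u : (ZMod e)ˣ)
    (hu : (u : ZMod e) = (t : ZMod e)) (hord : orderOf u = d)
    (b : ZMod e) (a : ℕ) :
    conjugatesOf
        (⟨Multiplicative.ofAdd b, Multiplicative.ofAdd (a : ZMod d)⟩ :
          Gdet d e u (by rw [← hord]; exact pow_orderOf_eq_one u))
      = {x | ∃ r s : ℤ,
          x = ⟨Multiplicative.ofAdd (((u ^ r : (ZMod e)ˣ) : ZMod e) * b
                  + (s : ZMod e) * (1 - (t : ZMod e) ^ a)),
               Multiplicative.ofAdd (a : ZMod d)⟩} := by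
  have hu' : u ^ d = 1 := by rw [← hord]; exact pow_orderOf_eq_one u
  ext x
  simp only [conjugatesOf, Set.mem_setOf_eq, isConj_iff]
  constructor
  · rintro ⟨z, rfl⟩
    obtain ⟨r, hr⟩ := ZMod.intCast_surjective (Multiplicative.toAdd z.right)
    obtain ⟨s, hs⟩ := ZMod.intCast_surjective (Multiplicative.toAdd z.left)
    refine ⟨r, s, ?_⟩
    have hz : z = ⟨Multiplicative.ofAdd ((s : ZMod e)), Multiplicative.ofAdd ((r : ZMod d))⟩ := by
      apply SemidirectProduct.ext
      · rw [hs]; rfl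
      · rw [hr]; rfl
    rw [hz, conj_formula hu' t hu b a r s]
  · rintro ⟨r, s, rfl⟩
    exact ⟨⟨Multiplicative.ofAdd ((s : ZMod e)), Multiplicative.ofAdd ((r : ZMod d))⟩,
      conj_formula hu' t hu b a r s⟩
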